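/- Let g be a Lie algebra with basis e₁,…,e_n (n ≥ 4, indices i ∈ {5,…,n}) whose only possibly nonzero structure constants lie in the set {C³₁₄, C²₄ᵢ, C³₁ᵢ, Cⁱ₁₄, C²₄₁, C²₁ᵢ, C²ᵢⱼ, Cⁱ₁ⱼ, C²₁₂, C²₃₄, C³₁₃, C⁴₁₄, C²₁₃, Cⁱ₁₃, C⁴₁ᵢ, C²₃ᵢ, C⁴ᵢⱼ, Cⁱ₃ⱼ, C⁴₃₄, C⁴₁₂, C¹₁₃, C²₂₃, C⁴₁₃, C⁴₃ᵢ, C⁴₂₃} but with C³₁₄ = C¹₁₃ = C⁴₃₄ = C²₃₂ = 0 and additionally only those of boost weight satisfying 2b₁+b₂ ≤ −1 (case [2,1/2]) nonzero. Then the derived series satisfies g₁ = [g,g] ⊆ span{e₂,e₃,e₄,e₅,…,e_n}, g₂ = [g₁,g₁] ⊆ span{e₂,e₄}, [g₁,g₂] ⊆ span{e₂}, [g₁,[g₁,g₂]] = 0; in particular g is solvable. -/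

import Mathlib

private lemma bracket_mem_of_span {L : Type*} [LieRing L] [LieAlgebra ℝ L]
    (s t : Set L) (P : Submodule ℝ L)
    (h : ∀ x ∈ s, ∀ y ∈ t, ⁅x, y⁆ ∈ P) :
    ∀ x ∈ Submodule.span ℝ s, ∀ y ∈ Submodule.span ℝ t, ⁅x, y⁆ ∈ P := by
  intro x hx
  refine Submodule.span_induction
    (p := fun x _ => ∀ y ∈ Submodule.span ℝ t, ⁅x, y⁆ ∈ P) ?_ ?_ ?_ ?_ hx
  · intro a ha y hy
    refine Submodule.span_induction (p := fun y _ => ⁅a, y⁆ ∈ P)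
      (fun c hc => h a ha c hc) (by simp) ?_ ?_ hy
    · intro u v _ _ hu hv; rw [lie_add]; exact P.add_mem hu hv
    · intro r u _ hu; rw [lie_smul]; exact P.smul_mem r hu
  · intro y _; simp
  · intro u v _ _ hu hv y hy; rw [add_lie]; exact P.add_mem (hu y hy) (hv y hy)
  · intro r u _ hu y hy; rw [smul_lie]; exact P.smul_mem r (hu y hy)

private lemma mem_of_mem_lieIdeal {L : Type*} [LieRing L] [LieAlgebra ℝ L]
    (I J : LieIdeal ℝ L) (P : Submodule ℝ L)
    (h : ∀ x ∈ I, ∀ y ∈ J, ⁅x, y⁆ ∈ P) : ∀ z ∈ ⁅I, J⁆, z ∈ P := by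
  intro z hz
  have hz' : z ∈ (⁅I, J⁆ : LieSubmodule ℝ L L) := hz
  rw [← LieSubmodule.mem_toSubmodule, LieSubmodule.lieIdeal_oper_eq_linear_span'] at hz'
  refine Submodule.span_le.mpr ?_ hz'
  rintro _ ⟨x, hx, y, hy, rfl⟩
  exact h x hx y hy

/-- case [2,1/2] in signature (2,2+k). Let `g` be a Lie algebra with
null-frame basis `e₁,e₂,e₃,e₄,eᵢ` (`b 0 = e₁`, …, `b 3 = e₄`, and `b i = e_{i+1}` for
`i ≥ 4`) whose structure constants are supported only on the boost weights allowed in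
case [2,1/2] (in particular `C³₁₄ = C¹₁₃ = C⁴₃₄ = C²₃₂ = 0`, and all weight `(0,−1)` and
`(1,−2)` constants vanish). Then `g₁ = [g,g] ⊆ span{e₂,e₃,e₄,e₅,…}`,
`g₂ = [g₁,g₁] ⊆ span{e₂,e₄}`, `⁅g₁,g₂⁆ ⊆ span{e₂}`, `⁅g₁,⁅g₁,g₂⁆⁆ = 0`; in particular
`g` is solvable. -/
theorem case_two_half_solvable
    (n : ℕ) (hn : 4 ≤ n) (L : Type*) [LieRing L] [LieAlgebra ℝ L]
    (b : Module.Basis (Fin n) ℝ L)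
    (h12 : ⁅b ⟨0, by omega⟩, b ⟨1, by omega⟩⁆ ∈ Submodule.span ℝ {b ⟨1, by omega⟩})
    (h13 : ⁅b ⟨0, by omega⟩, b ⟨2, by omega⟩⁆ ∈ Submodule.span ℝ
      ({b ⟨1, by omega⟩, b ⟨3, by omega⟩} ∪ b '' {j : Fin n | 4 ≤ (j : ℕ)}))
    (h14 : ⁅b ⟨0, by omega⟩, b ⟨3, by omega⟩⁆ ∈ Submodule.span ℝ
      ({b ⟨1, by omega⟩} ∪ b '' {j : Fin n | 4 ≤ (j : ℕ)}))
    (h1i : ∀ i : Fin n, 4 ≤ (i : ℕ) → ⁅b ⟨0, by omega⟩, b i⁆ ∈ Submodule.span ℝ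
      ({b ⟨1, by omega⟩, b ⟨2, by omega⟩, b ⟨3, by omega⟩} ∪ b '' {j : Fin n | 4 ≤ (j : ℕ)}))
    (h23 : ⁅b ⟨1, by omega⟩, b ⟨2, by omega⟩⁆ = 0)
    (h24 : ⁅b ⟨1, by omega⟩, b ⟨3, by omega⟩⁆ = 0)
    (h2i : ∀ i : Fin n, 4 ≤ (i : ℕ) → ⁅b ⟨1, by omega⟩, b i⁆ = 0)
    (h34 : ⁅b ⟨2, by omega⟩, b ⟨3, by omega⟩⁆ ∈ Submodule.span ℝ {b ⟨1, by omega⟩})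
    (h3i : ∀ i : Fin n, 4 ≤ (i : ℕ) →
      ⁅b ⟨2, by omega⟩, b i⁆ ∈ Submodule.span ℝ {b ⟨1, by omega⟩, b ⟨3, by omega⟩})
    (h4i : ∀ i : Fin n, 4 ≤ (i : ℕ) →
      ⁅b ⟨3, by omega⟩, b i⁆ ∈ Submodule.span ℝ {b ⟨1, by omega⟩})
    (hij : ∀ i j : Fin n, 4 ≤ (i : ℕ) → 4 ≤ (j : ℕ) →
      ⁅b i, b j⁆ ∈ Submodule.span ℝ {b ⟨1, by omega⟩}) :
    (∀ z ∈ LieAlgebra.derivedSeries ℝ L 1, z ∈ Submodule.span ℝ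
      ({b ⟨1, by omega⟩, b ⟨2, by omega⟩, b ⟨3, by omega⟩} ∪ b '' {j : Fin n | 4 ≤ (j : ℕ)})) ∧
    (∀ z ∈ LieAlgebra.derivedSeries ℝ L 2,
      z ∈ Submodule.span ℝ {b ⟨1, by omega⟩, b ⟨3, by omega⟩}) ∧
    (∀ z ∈ ⁅LieAlgebra.derivedSeries ℝ L 1, LieAlgebra.derivedSeries ℝ L 2⁆,
      z ∈ Submodule.span ℝ {b ⟨1, by omega⟩}) ∧
    ⁅LieAlgebra.derivedSeries ℝ L 1,
      ⁅LieAlgebra.derivedSeries ℝ L 1, LieAlgebra.derivedSeries ℝ L 2⁆⁆ =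
        (⊥ : LieIdeal ℝ L) ∧
    LieAlgebra.IsSolvable L := by
  classical
  let e1 : L := b ⟨1, by omega⟩
  let e2 : L := b ⟨2, by omega⟩
  let e3 : L := b ⟨3, by omega⟩
  let G1 : Set L := {e1, e2, e3} ∪ b '' {j : Fin n | 4 ≤ (j : ℕ)}
  let S1 : Submodule ℝ L := Submodule.span ℝ G1
  let S2 : Submodule ℝ L := Submodule.span ℝ {e1, e3}
  let S3 : Submodule ℝ L := Submodule.span ℝ {e1}
  -- subset facts
  have hsub1 : ({e1} : Set L) ⊆ G1 := by
    intro x hx; rcases hx with rfl; exact Or.inl (Set.mem_insert _ _)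
  have hsub13 : ({e1, e3} : Set L) ⊆ G1 := by
    intro x hx; rcases hx with rfl | rfl
    · exact Or.inl (Set.mem_insert _ _)
    · exact Or.inl (by right; right; rfl)
  have hsp1 : Submodule.span ℝ ({e1} : Set L) ≤ S1 := Submodule.span_mono hsub1
  have hsp13 : Submodule.span ℝ ({e1, e3} : Set L) ≤ S1 := Submodule.span_mono hsub13
  have hsp1i : Submodule.span ℝ (({e1} : Set L) ∪ b '' {j : Fin n | 4 ≤ (j : ℕ)}) ≤ S1 := by
    apply Submodule.span_mono
    exact Set.union_subset hsub1 Set.subset_union_right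
  have hsp13i : Submodule.span ℝ (({e1, e3} : Set L) ∪ b '' {j : Fin n | 4 ≤ (j : ℕ)}) ≤ S1 := by
    apply Submodule.span_mono
    exact Set.union_subset hsub13 Set.subset_union_right
  have hS32 : S3 ≤ S2 := Submodule.span_mono (by intro x hx; rcases hx with rfl; exact Set.mem_insert _ _)
  have fin_eq : ∀ (k : ℕ) (hk : k < n) (i : Fin n), (i : ℕ) = k → b i = b ⟨k, hk⟩ := by
    intro k hk i hik; congr 1; exact Fin.ext hik
  -- all brackets of basis vectors lie in S1
  have main : ∀ i j : Fin n, (i : ℕ) < (j : ℕ) → ⁅b i, b j⁆ ∈ S1 := by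
    intro i j hlt
    by_cases hi0 : (i : ℕ) = 0
    · rw [fin_eq 0 (by omega) i hi0]
      by_cases hj1 : (j : ℕ) = 1
      · rw [fin_eq 1 (by omega) j hj1]; exact hsp1 h12
      by_cases hj2 : (j : ℕ) = 2
      · rw [fin_eq 2 (by omega) j hj2]; exact hsp13i h13
      by_cases hj3 : (j : ℕ) = 3
      · rw [fin_eq 3 (by omega) j hj3]; exact hsp1i h14
      · exact h1i j (by omega)
    by_cases hi1 : (i : ℕ) = 1
    · rw [fin_eq 1 (by omega) i hi1]
      by_cases hj2 : (j : ℕ) = 2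
      · rw [fin_eq 2 (by omega) j hj2, h23]; exact S1.zero_mem
      by_cases hj3 : (j : ℕ) = 3
      · rw [fin_eq 3 (by omega) j hj3, h24]; exact S1.zero_mem
      · rw [h2i j (by omega)]; exact S1.zero_mem
    by_cases hi2 : (i : ℕ) = 2
    · rw [fin_eq 2 (by omega) i hi2]
      by_cases hj3 : (j : ℕ) = 3
      · rw [fin_eq 3 (by omega) j hj3]; exact hsp1 h34
      · exact hsp13 (h3i j (by omega))
    by_cases hi3 : (i : ℕ) = 3
    · rw [fin_eq 3 (by omega) i hi3]; exact hsp1 (h4i j (by omega))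
    · exact hsp1 (hij i j (by omega) (by omega))
  have key : ∀ i j : Fin n, ⁅b i, b j⁆ ∈ S1 := by
    intro i j
    rcases lt_trichotomy (i : ℕ) (j : ℕ) with h | h | h
    · exact main i j h
    · obtain rfl : i = j := Fin.ext h
      rw [lie_self]; exact S1.zero_mem
    · rw [← lie_skew]; exact S1.neg_mem (main j i h)
  have hall : ∀ x : L, x ∈ Submodule.span ℝ (Set.range b) := by
    intro x; rw [b.span_eq]; trivial
  have step1 : ∀ x y : L, ⁅x, y⁆ ∈ S1 := fun x y =>
    bracket_mem_of_span _ _ _ (by rintro _ ⟨i, rfl⟩ _ ⟨j, rfl⟩; exact key i j)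
      x (hall x) y (hall y)
  -- generators of S1
  have hgen : ∀ x ∈ G1, x = e1 ∨ x = e2 ∨ x = e3 ∨ ∃ i : Fin n, 4 ≤ (i : ℕ) ∧ x = b i := by
    intro x hx
    rcases hx with h | h
    · rcases h with h | h | h
      · exact Or.inl h
      · exact Or.inr (Or.inl h)
      · exact Or.inr (Or.inr (Or.inl h))
    · obtain ⟨i, hi, rfl⟩ := h
      exact Or.inr (Or.inr (Or.inr ⟨i, hi, rfl⟩))
  -- basic bracket facts among generators
  have B12 : ⁅e1, e2⁆ = (0 : L) := h23
  have B13 : ⁅e1, e3⁆ = (0 : L) := h24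
  have B1i : ∀ i : Fin n, 4 ≤ (i : ℕ) → ⁅e1, b i⁆ = 0 := h2i
  have B23 : ⁅e2, e3⁆ ∈ S3 := h34
  have B2i : ∀ i : Fin n, 4 ≤ (i : ℕ) → ⁅e2, b i⁆ ∈ S2 := h3i
  have B3i : ∀ i : Fin n, 4 ≤ (i : ℕ) → ⁅e3, b i⁆ ∈ S3 := h4i
  have Bij : ∀ i j : Fin n, 4 ≤ (i : ℕ) → 4 ≤ (j : ℕ) → ⁅b i, b j⁆ ∈ S3 := hij
  have skew_zero : ∀ x y : L, ⁅x, y⁆ = 0 → ⁅y, x⁆ = 0 := by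
    intro x y h; rw [← lie_skew, h, neg_zero]
  have skew_mem : ∀ (P : Submodule ℝ L) (x y : L), ⁅x, y⁆ ∈ P → ⁅y, x⁆ ∈ P := by
    intro P x y h; rw [← lie_skew]; exact P.neg_mem h
  -- generator brackets land in S2
  have genbr2 : ∀ x ∈ G1, ∀ y ∈ G1, ⁅x, y⁆ ∈ S2 := by
    intro x hx y hy
    rcases hgen x hx with rfl | rfl | rfl | ⟨i, hi, rfl⟩ <;>
      rcases hgen y hy with rfl | rfl | rfl | ⟨j, hj, rfl⟩
    · rw [lie_self]; exact S2.zero_mem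
    · rw [B12]; exact S2.zero_mem
    · rw [B13]; exact S2.zero_mem
    · rw [B1i j hj]; exact S2.zero_mem
    · rw [skew_zero _ _ B12]; exact S2.zero_mem
    · rw [lie_self]; exact S2.zero_mem
    · exact hS32 B23
    · exact B2i j hj
    · rw [skew_zero _ _ B13]; exact S2.zero_mem
    · exact skew_mem _ _ _ (hS32 B23)
    · rw [lie_self]; exact S2.zero_mem
    · exact hS32 (B3i j hj)
    · rw [skew_zero _ _ (B1i i hi)]; exact S2.zero_mem
    · exact skew_mem _ _ _ (B2i i hi)
    · exact skew_mem _ _ _ (hS32 (B3i i hi))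
    · exact hS32 (Bij i j hi hj)
  -- generator brackets S1 × S2 land in S3
  have genbr3 : ∀ x ∈ G1, ∀ y ∈ ({e1, e3} : Set L), ⁅x, y⁆ ∈ S3 := by
    intro x hx y hy
    rcases hgen x hx with rfl | rfl | rfl | ⟨i, hi, rfl⟩ <;> rcases hy with rfl | rfl
    · rw [lie_self]; exact S3.zero_mem
    · rw [B13]; exact S3.zero_mem
    · rw [skew_zero _ _ B12]; exact S3.zero_mem
    · exact B23
    · rw [skew_zero _ _ B13]; exact S3.zero_mem
    · rw [lie_self]; exact S3.zero_mem
    · rw [skew_zero _ _ (B1i i hi)]; exact S3.zero_mem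
    · exact skew_mem _ _ _ (B3i i hi)
  -- generator brackets S1 × S3 vanish
  have genbr4 : ∀ x ∈ G1, ∀ y ∈ ({e1} : Set L), ⁅x, y⁆ ∈ (⊥ : Submodule ℝ L) := by
    intro x hx y hy
    rcases hy with rfl
    rcases hgen x hx with rfl | rfl | rfl | ⟨i, hi, rfl⟩
    · rw [lie_self]; exact Submodule.zero_mem _
    · rw [skew_zero _ _ B12]; exact Submodule.zero_mem _
    · rw [skew_zero _ _ B13]; exact Submodule.zero_mem _
    · rw [skew_zero _ _ (B1i i hi)]; exact Submodule.zero_mem _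
  -- derived series shorthand
  have hsucc : ∀ k, LieAlgebra.derivedSeries ℝ L (k + 1) =
      ⁅LieAlgebra.derivedSeries ℝ L k, LieAlgebra.derivedSeries ℝ L k⁆ := by
    intro k
    rw [LieAlgebra.derivedSeries_def, LieAlgebra.derivedSeriesOfIdeal_succ,
      ← LieAlgebra.derivedSeries_def]
  have c1 : ∀ z ∈ LieAlgebra.derivedSeries ℝ L 1, z ∈ S1 := by
    rw [hsucc 0]
    exact mem_of_mem_lieIdeal _ _ S1 (fun x _ y _ => step1 x y)
  have step2 : ∀ x ∈ S1, ∀ y ∈ S1, ⁅x, y⁆ ∈ S2 := bracket_mem_of_span G1 G1 S2 genbr2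
  have c2 : ∀ z ∈ LieAlgebra.derivedSeries ℝ L 2, z ∈ S2 := by
    rw [hsucc 1]
    exact mem_of_mem_lieIdeal _ _ S2 (fun x hx y hy => step2 x (c1 x hx) y (c1 y hy))
  have step3 : ∀ x ∈ S1, ∀ y ∈ S2, ⁅x, y⁆ ∈ S3 :=
    bracket_mem_of_span G1 {e1, e3} S3 genbr3
  have c3 : ∀ z ∈ ⁅LieAlgebra.derivedSeries ℝ L 1, LieAlgebra.derivedSeries ℝ L 2⁆, z ∈ S3 :=
    mem_of_mem_lieIdeal _ _ S3 (fun x hx y hy => step3 x (c1 x hx) y (c2 y hy))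
  have step4 : ∀ x ∈ S1, ∀ y ∈ S3, ⁅x, y⁆ ∈ (⊥ : Submodule ℝ L) :=
    bracket_mem_of_span G1 {e1} ⊥ genbr4
  have c4 : ⁅LieAlgebra.derivedSeries ℝ L 1,
      ⁅LieAlgebra.derivedSeries ℝ L 1, LieAlgebra.derivedSeries ℝ L 2⁆⁆ = (⊥ : LieIdeal ℝ L) := by
    rw [LieSubmodule.eq_bot_iff]
    intro m hm
    have hmem := mem_of_mem_lieIdeal _ _ (⊥ : Submodule ℝ L)
      (fun x hx y hy => step4 x (c1 x hx) y (c3 y hy)) m hm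
    simpa using hmem
  refine ⟨c1, c2, c3, c4, (LieAlgebra.isSolvable_iff ℝ L).mpr ⟨4, ?_⟩⟩
  have h21 : LieAlgebra.derivedSeries ℝ L 2 ≤ LieAlgebra.derivedSeries ℝ L 1 := by
    rw [hsucc 1]; exact LieSubmodule.lie_le_left _ _
  have h3le : LieAlgebra.derivedSeries ℝ L 3 ≤
      ⁅LieAlgebra.derivedSeries ℝ L 1, LieAlgebra.derivedSeries ℝ L 2⁆ := by
    rw [hsucc 2]; exact LieSubmodule.mono_lie h21 le_rfl
  have h31 : LieAlgebra.derivedSeries ℝ L 3 ≤ LieAlgebra.derivedSeries ℝ L 1 := by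
    rw [hsucc 2]; exact le_trans (LieSubmodule.lie_le_left _ _) h21
  have h4le : LieAlgebra.derivedSeries ℝ L 4 ≤
      ⁅LieAlgebra.derivedSeries ℝ L 1,
        ⁅LieAlgebra.derivedSeries ℝ L 1, LieAlgebra.derivedSeries ℝ L 2⁆⁆ := by
    rw [hsucc 3]; exact LieSubmodule.mono_lie h31 h3le
  rw [c4] at h4le
  exact le_bot_iff.mp h4le
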